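/- Let d ≥ 2, let x, y ∈ ℂ^d be unit vectors, let {W_{i,j} : 0 ≤ i, j ≤ d−1} be the discrete Weyl matrices, and define Φ : M_d(ℂ) → M_d(ℂ) by Φ(X) = Σ_{i,j=0}^{d−1} (W_{i,j} x)(W_{i,j} y)* X (W_{i,j} y)(W_{i,j} x)*. Then for every 0 ≤ k ≤ d−1 the matrix Φ(E_{k,k}) is diagonal, and for every k ≠ l all diagonal entries of Φ(E_{k,l}) are zero. -/

import Mathlib

open Matrix

/-- The cyclic shift matrix `U` on `ℂ^d`, sending `e_k` to `e_{k+1 (mod d)}`. -/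
noncomputable def weylU (d : ℕ) : Matrix (Fin d) (Fin d) ℂ :=
  fun k l => if (k : ℕ) = ((l : ℕ) + 1) % d then 1 else 0

/-- The diagonal matrix `V = diag(1, ω, ω², ..., ω^{d-1})` where `ω = exp(2πi/d)`. -/
noncomputable def weylV (d : ℕ) : Matrix (Fin d) (Fin d) ℂ :=
  Matrix.diagonal fun k => Complex.exp (2 * Real.pi * Complex.I / d) ^ (k : ℕ)

/-- The discrete Weyl matrices `W_{i,j} = Uⁱ Vʲ`. -/
noncomputable def weylW (d : ℕ) (i j : Fin d) : Matrix (Fin d) (Fin d) ℂ :=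
  weylU d ^ (i : ℕ) * weylV d ^ (j : ℕ)

/-- The rank-one matrix `x y*` with entries `(x y*)_{k,l} = x_k * conj (y_l)`. -/
noncomputable def outer {d : ℕ} (x y : Fin d → ℂ) : Matrix (Fin d) (Fin d) ℂ :=
  fun k l => x k * (starRingEnd ℂ) (y l)

section aux
variable {d : ℕ}

lemma weylU_mulVec (hd : 2 ≤ d) (v : Fin d → ℂ) (m : Fin d) :
    haveI : NeZero d := ⟨by omega⟩
    (weylU d).mulVec v m = v (m - 1) := by
  haveI : NeZero d := ⟨by omega⟩
  have hcond : ∀ l : Fin d, ((m : ℕ) = ((l : ℕ) + 1) % d) ↔ l = m - 1 := by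
    intro l
    have h1 : ((1 : Fin d) : ℕ) = 1 := by
      simp [Fin.val_one, Nat.mod_eq_of_lt (by omega : 1 < d)]
    rw [show ((l : ℕ) + 1) % d = ((l + 1 : Fin d) : ℕ) by rw [Fin.val_add, h1]]
    rw [eq_comm, Fin.val_eq_val, eq_sub_iff_add_eq, eq_comm]
  simp only [Matrix.mulVec, dotProduct, weylU, hcond]
  simp [Finset.sum_ite_eq']

open Fin.NatCast in
lemma weylU_pow_mulVec (hd : 2 ≤ d) (i : ℕ) (v : Fin d → ℂ) (m : Fin d) :
    haveI : NeZero d := ⟨by omega⟩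
    ((weylU d ^ i).mulVec v) m = v (m - (i : Fin d)) := by
  haveI : NeZero d := ⟨by omega⟩
  induction i generalizing v m with
  | zero => simp
  | succ n ih =>
    rw [pow_succ, ← Matrix.mulVec_mulVec]
    rw [ih]
    rw [weylU_mulVec hd]
    congr 1
    push_cast
    abel

lemma weylV_pow_mulVec (j : ℕ) (v : Fin d → ℂ) (m : Fin d) :
    ((weylV d ^ j).mulVec v) m
      = Complex.exp (2 * Real.pi * Complex.I / d) ^ ((m : ℕ) * j) * v m := by
  rw [weylV, Matrix.diagonal_pow, Matrix.mulVec_diagonal, Pi.pow_apply, ← pow_mul]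

open Fin.NatCast in
lemma weylW_mulVec (hd : 2 ≤ d) (i j : Fin d) (v : Fin d → ℂ) (m : Fin d) :
    haveI : NeZero d := ⟨by omega⟩
    ((weylW d i j).mulVec v) m
      = Complex.exp (2 * Real.pi * Complex.I / d) ^ (((m - i : Fin d) : ℕ) * (j : ℕ))
          * v (m - i) := by
  haveI : NeZero d := ⟨by omega⟩
  rw [weylW, ← Matrix.mulVec_mulVec, weylU_pow_mulVec hd, Fin.cast_val_eq_self,
    weylV_pow_mulVec]

lemma outer_std_outer (a b c e : Fin d → ℂ) (k l m n : Fin d) :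
    (outer a b * Matrix.single k l (1 : ℂ) * outer c e) m n
      = a m * (starRingEnd ℂ) (b k) * (c l * (starRingEnd ℂ) (e n)) := by
  simp [Matrix.mul_apply, outer, Matrix.single, Finset.sum_ite_eq, ite_and,
    Finset.mul_sum, mul_ite, ite_mul, Finset.sum_ite_eq', mul_assoc]

end aux

section main
variable {d : ℕ}

lemma key_entry (hd : 2 ≤ d) (x y : Fin d → ℂ) (k l m n : Fin d)
    (h : m + l ≠ k + n) :
    (∑ i : Fin d, ∑ j : Fin d,
        outer ((weylW d i j).mulVec x) ((weylW d i j).mulVec y) *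
          Matrix.single k l (1 : ℂ) *
          outer ((weylW d i j).mulVec y) ((weylW d i j).mulVec x)) m n = 0 := by
  haveI : NeZero d := ⟨by omega⟩
  set ζ := Complex.exp (2 * Real.pi * Complex.I / d) with hζdef
  have hd0 : (d : ℂ) ≠ 0 := Nat.cast_ne_zero.mpr (by omega)
  have hζd : ζ ^ d = 1 := by
    rw [hζdef, ← Complex.exp_nat_mul]
    rw [show (d : ℂ) * (2 * Real.pi * Complex.I / d) = 2 * Real.pi * Complex.I by
      field_simp]
    exact Complex.exp_two_pi_mul_I
  have hζ0 : ζ ≠ 0 := Complex.exp_ne_zero _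
  have hprim : IsPrimitiveRoot ζ d := Complex.isPrimitiveRoot_exp d (by omega)
  have hpowmod : ∀ a : ℕ, ζ ^ a = ζ ^ (a % d) := by
    intro a
    conv_lhs => rw [← Nat.div_add_mod a d]
    rw [pow_add, pow_mul, hζd, one_pow, one_mul]
  have hconjζ : (starRingEnd ℂ) ζ = ζ⁻¹ := by
    rw [hζdef, ← Complex.exp_conj, ← Complex.exp_neg]
    congr 1
    simp [map_div₀, Complex.conj_I, map_ofNat]
    ring
  have hconj : ∀ a : ℕ, (starRingEnd ℂ) (ζ ^ a) = (ζ ^ a)⁻¹ := by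
    intro a; rw [map_pow, hconjζ, inv_pow]
  simp only [Matrix.sum_apply]
  apply Finset.sum_eq_zero
  intro i _
  set A : ℕ := ((m - i : Fin d) : ℕ)
  set B : ℕ := ((k - i : Fin d) : ℕ)
  set C : ℕ := ((l - i : Fin d) : ℕ)
  set D : ℕ := ((n - i : Fin d) : ℕ)
  set r : ℂ := ζ ^ (A + C) * (ζ ^ (B + D))⁻¹ with hrdef
  set c : ℂ := x (m - i) * (starRingEnd ℂ) (y (k - i)) *
      (y (l - i) * (starRingEnd ℂ) (x (n - i))) with hcdef
  have hterm : ∀ j : Fin d,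
      (outer ((weylW d i j).mulVec x) ((weylW d i j).mulVec y) *
        Matrix.single k l (1 : ℂ) *
        outer ((weylW d i j).mulVec y) ((weylW d i j).mulVec x)) m n
        = r ^ (j : ℕ) * c := by
    intro j
    rw [outer_std_outer, weylW_mulVec hd, weylW_mulVec hd, weylW_mulVec hd,
      weylW_mulVec hd]
    have expand : r ^ (j : ℕ)
        = ζ ^ (A * (j : ℕ)) * (ζ ^ (B * (j : ℕ)))⁻¹ *
          (ζ ^ (C * (j : ℕ)) * (ζ ^ (D * (j : ℕ)))⁻¹) := by
      rw [hrdef, mul_pow, inv_pow, ← pow_mul, ← pow_mul, add_mul, add_mul,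
        pow_add, pow_add, mul_inv]
      ring
    rw [expand, hcdef, ← hζdef]
    simp only [_root_.map_mul, hconj]
    ring
  rw [Finset.sum_congr rfl fun j _ => hterm j, ← Finset.sum_mul]
  have hr1 : r ≠ 1 := by
    intro hr
    have hab : ζ ^ (A + C) = ζ ^ (B + D) := by
      rw [hrdef] at hr
      exact (mul_inv_eq_one₀ (pow_ne_zero _ hζ0)).mp hr
    rw [hpowmod (A + C), hpowmod (B + D)] at hab
    have hmod := hprim.pow_inj (Nat.mod_lt _ (by omega)) (Nat.mod_lt _ (by omega)) hab
    have hfin : (m - i) + (l - i) = (k - i) + (n - i) := by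
      apply Fin.ext
      rw [Fin.val_add, Fin.val_add]
      exact hmod
    rw [sub_add_sub_comm, sub_add_sub_comm, sub_left_inj] at hfin
    exact h hfin
  have hrd : r ^ d = 1 := by
    rw [hrdef, mul_pow, inv_pow, ← pow_mul, ← pow_mul, mul_comm (A + C) d,
      mul_comm (B + D) d, pow_mul, pow_mul, hζd, one_pow, one_pow, inv_one, mul_one]
  rw [Fin.sum_univ_eq_sum_range (fun j => r ^ j) d, geom_sum_eq hr1, hrd,
    sub_self, zero_div, zero_mul]

end main

/-- Let `x, y ∈ ℂ^d` be unit vectors and define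
`Φ(X) = ∑_{i,j} (W_{i,j} x)(W_{i,j} y)* X (W_{i,j} y)(W_{i,j} x)*`. Then `Φ(E_{k,k})` is a
diagonal matrix for every `k`, and for `k ≠ l` all diagonal entries of `Φ(E_{k,l})` vanish. -/
theorem weyl_covariant_channel_diag {d : ℕ} (hd : 2 ≤ d)
    (x y : EuclideanSpace ℂ (Fin d)) (hx : ‖x‖ = 1) (hy : ‖y‖ = 1) :
    (∀ k : Fin d,
      (∑ i : Fin d, ∑ j : Fin d,
          outer ((weylW d i j).mulVec x) ((weylW d i j).mulVec y) *
            Matrix.single k k (1 : ℂ) *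
            outer ((weylW d i j).mulVec y) ((weylW d i j).mulVec x)).IsDiag) ∧
    (∀ k l : Fin d, k ≠ l → ∀ m : Fin d,
      (∑ i : Fin d, ∑ j : Fin d,
          outer ((weylW d i j).mulVec x) ((weylW d i j).mulVec y) *
            Matrix.single k l (1 : ℂ) *
            outer ((weylW d i j).mulVec y) ((weylW d i j).mulVec x)) m m = 0) := by
  haveI : NeZero d := ⟨by omega⟩
  constructor
  · intro k m n hmn
    apply key_entry hd x y k k m n
    intro hc
    rw [add_comm k n] at hc
    exact hmn (add_right_cancel hc)
  · intro k l hkl m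
    apply key_entry hd x y k l m m
    intro hc
    rw [add_comm k m] at hc
    exact hkl (add_left_cancel hc).symm
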